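/- Fix integers n ≥ 1, m ≥ 1, N = n + m, and an injective function r : Fin N → ℝ. Let Z be a uniformly random n-element subset of Fin N. Then for every j ∈ {0, 1, …, m}, the expected number of treated units i ∈ Z whose placement p_i(Z) = |{ ℓ ∉ Z : r ℓ < r i }| equals j is n / (m + 1). -/

import Mathlib

open Finset

private lemma count_unique {N : ℕ} (r : Fin N → ℝ) (hr : Function.Injective r)
    (S : Finset (Fin N)) {i i' : Fin N} (hi : i ∈ S) (hi' : i' ∈ S)
    (h : (S.filter (fun l => r l < r i)).card = (S.filter (fun l => r l < r i')).card) :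
    i = i' := by
  by_contra hne
  have hrne : r i ≠ r i' := fun e => hne (hr e)
  have key : ∀ a b : Fin N, a ∈ S → b ∈ S → r a < r b →
      (S.filter (fun l => r l < r a)).card < (S.filter (fun l => r l < r b)).card := by
    intro a b ha hb hab
    apply Finset.card_lt_card
    constructor
    · intro l hl
      simp only [mem_filter] at hl ⊢
      exact ⟨hl.1, hl.2.trans hab⟩
    · intro hsub
      have : a ∈ S.filter (fun l => r l < r a) := hsub (by simp [ha, hab])
      simp at this
  rcases lt_or_gt_of_ne hrne with hlt | hlt
  · exact absurd h (Nat.ne_of_lt (key i i' hi hi' hlt))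
  · exact absurd h.symm (Nat.ne_of_lt (key i' i hi' hi hlt))

/-- Marginal uniformity of placements: under a uniformly random `n`-element treated
subset `Z` of `Fin N`, `N = n + m`, for each `j ∈ {0, …, m}` the expected number of
treated units whose placement equals `j` is `n / (m + 1)`. -/
theorem expected_count_placement_eq
    (n m N : ℕ) (hn : 1 ≤ n) (hm : 1 ≤ m) (hN : N = n + m)
    (r : Fin N → ℝ) (hr : Function.Injective r)
    (j : ℕ) (hj : j ≤ m) :
    (∑ Z ∈ (Finset.univ : Finset (Fin N)).powersetCard n,
        ((Z.filter (fun i => ((Zᶜ).filter (fun l => r l < r i)).card = j)).card : ℚ))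
        / (N.choose n : ℚ)
      = (n : ℚ) / ((m : ℚ) + 1) := by
  have hNn : n ≤ N := by omega
  -- Step 1: the numerator (as a natural number) equals C(N, m+1).
  have key : (∑ Z ∈ (Finset.univ : Finset (Fin N)).powersetCard n,
      (Z.filter (fun i => ((Zᶜ).filter (fun l => r l < r i)).card = j)).card)
      = N.choose (m+1) := by
    rw [← Finset.card_sigma]
    have : N.choose (m+1) = ((Finset.univ : Finset (Fin N)).powersetCard (m+1)).card := by
      rw [Finset.card_powersetCard, Finset.card_univ, Fintype.card_fin]
    rw [this]
    apply Finset.card_bij (fun x _ => insert x.2 (x.1)ᶜ)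
    · -- maps into powersetCard (m+1)
      rintro ⟨Z, i⟩ hx
      simp only [Finset.mem_sigma, Finset.mem_powersetCard_univ, Finset.mem_filter] at hx
      obtain ⟨hZ, hiZ, _⟩ := hx
      rw [Finset.mem_powersetCard_univ, Finset.card_insert_of_notMem (by simp [hiZ]),
        Finset.card_compl, hZ, Fintype.card_fin]
      omega
    · -- injective
      rintro ⟨Z, i⟩ hx ⟨Z', i'⟩ hx' heq
      simp only [Finset.mem_sigma, Finset.mem_powersetCard_univ, Finset.mem_filter] at hx hx'
      obtain ⟨hZ, hiZ, hcnt⟩ := hx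
      obtain ⟨hZ', hiZ', hcnt'⟩ := hx'
      set S := insert i Zᶜ with hS
      have hSi : i ∈ S := Finset.mem_insert_self _ _
      have hSi' : i' ∈ S := heq ▸ Finset.mem_insert_self _ _
      have filt : ∀ (W : Finset (Fin N)) (a : Fin N), a ∈ W →
          ((insert a Wᶜ).filter (fun l => r l < r a)).card
            = (Wᶜ.filter (fun l => r l < r a)).card := by
        intro W a ha
        rw [Finset.filter_insert]
        simp [lt_irrefl]
      have h1 : (S.filter (fun l => r l < r i)).card = j := by
        rw [hS, filt Z i hiZ]; exact hcnt
      have h2 : (S.filter (fun l => r l < r i')).card = j := by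
        rw [heq, filt Z' i' hiZ']; exact hcnt'
      have hii : i = i' := count_unique r hr S hSi hSi' (h1.trans h2.symm)
      subst hii
      have hZZ : Zᶜ = Z'ᶜ := by
        have e1 : (insert i Zᶜ).erase i = Zᶜ := Finset.erase_insert (by simp [hiZ])
        have e2 : (insert i Z'ᶜ).erase i = Z'ᶜ := Finset.erase_insert (by simp [hiZ'])
        have hmain : insert i Zᶜ = insert i Z'ᶜ := by simpa [hS] using heq
        rw [← e1, ← e2, hmain]
      have : Z = Z' := by
        have := congrArg (·ᶜ) hZZ
        simpa using this
      subst this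
      rfl
    · -- surjective
      intro S hS
      rw [Finset.mem_powersetCard_univ] at hS
      -- find i ∈ S with count j
      have hinj : Set.InjOn (fun i => (S.filter (fun l => r l < r i)).card) S := by
        intro a ha b hb hab
        exact count_unique r hr S ha hb hab
      have himg : (S.image (fun i => (S.filter (fun l => r l < r i)).card)).card = m + 1 := by
        rw [Finset.card_image_of_injOn hinj, hS]
      have hsub : S.image (fun i => (S.filter (fun l => r l < r i)).card)
          ⊆ Finset.range (m+1) := by
        intro c hc
        rw [Finset.mem_image] at hc
        obtain ⟨a, ha, hac⟩ := hc
        rw [Finset.mem_range]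
        have : (S.filter (fun l => r l < r a)).card ≤ (S.erase a).card := by
          apply Finset.card_le_card
          intro l hl
          rw [Finset.mem_filter] at hl
          rw [Finset.mem_erase]
          exact ⟨by rintro rfl; exact lt_irrefl _ hl.2, hl.1⟩
        rw [Finset.card_erase_of_mem ha, hS] at this
        omega
      have heq : S.image (fun i => (S.filter (fun l => r l < r i)).card)
          = Finset.range (m+1) :=
        Finset.eq_of_subset_of_card_le hsub (by rw [himg, Finset.card_range])
      have hjmem : j ∈ S.image (fun i => (S.filter (fun l => r l < r i)).card) := by
        rw [heq, Finset.mem_range]; omega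
      rw [Finset.mem_image] at hjmem
      obtain ⟨i, hiS, hij⟩ := hjmem
      refine ⟨⟨(S.erase i)ᶜ, i⟩, ?_, ?_⟩
      · simp only [Finset.mem_sigma, Finset.mem_powersetCard_univ, Finset.mem_filter]
        refine ⟨?_, ?_, ?_⟩
        · rw [Finset.card_compl, Finset.card_erase_of_mem hiS, hS, Fintype.card_fin]
          omega
        · simp
        · rw [compl_compl]
          have : (S.erase i).filter (fun l => r l < r i)
              = S.filter (fun l => r l < r i) := by
            rw [Finset.filter_erase, Finset.erase_eq_of_notMem (by simp [lt_irrefl])]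
          rw [this]; exact hij
      · simp only [compl_compl]
        exact Finset.insert_erase hiS
  -- Step 2: arithmetic
  have hsum : (∑ Z ∈ (Finset.univ : Finset (Fin N)).powersetCard n,
        ((Z.filter (fun i => ((Zᶜ).filter (fun l => r l < r i)).card = j)).card : ℚ))
      = (N.choose (m+1) : ℚ) := by
    rw [← key]; push_cast; rfl
  rw [hsum]
  have hcpos : 0 < N.choose n := Nat.choose_pos hNn
  have hqpos : (0:ℚ) < (N.choose n : ℚ) := by exact_mod_cast hcpos
  rw [div_eq_div_iff hqpos.ne' (by positivity)]
  have hnat : N.choose (m+1) * (m+1) = n * N.choose n := by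
    have h1 := Nat.add_one_mul_choose_eq (N-1) m
    have h2 := Nat.add_one_mul_choose_eq (N-1) (n-1)
    have e1 : N - 1 + 1 = N := by omega
    have e2 : m + 1 = Nat.succ m := rfl
    have e3 : n - 1 + 1 = n := by omega
    have hsymm : (N-1).choose m = (N-1).choose (n-1) := by
      have : (N-1) - (n-1) = m := by omega
      rw [← this]
      exact Nat.choose_symm (by omega)
    rw [e1] at h1 h2
    rw [e3] at h2
    -- h1 : N * (N-1).choose m = N.choose (m+1) * (m+1)
    -- h2 : N * (N-1).choose (n-1) = N.choose n * n
    rw [← h1, hsymm, h2]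
    ring
  calc (N.choose (m+1) : ℚ) * ((m:ℚ) + 1) = ((N.choose (m+1) * (m+1) : ℕ) : ℚ) := by
        push_cast; ring
    _ = ((n * N.choose n : ℕ) : ℚ) := by rw [hnat]
    _ = (n:ℚ) * (N.choose n : ℚ) := by push_cast; ring
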